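/- There exists a primitive embedding of the lattice (ℤ¹⁴, M) into the K3 lattice: an injective ℤ-linear map ι : ℤ¹⁴ → ℤ²² with (ι x)ᵀ G (ι y) = xᵀ M y for all x, y ∈ ℤ¹⁴, such that ℤ²² / ι(ℤ¹⁴) is torsion-free. -/

import Mathlib

open Matrix

def M : Matrix (Fin 14) (Fin 14) ℤ :=
  !![-2, 0, 0, 0, 0, 0, 1, 0, 0, 0, 0, 0, 0, 0;
    0, -2, 0, 0, 0, 0, 1, 1, 0, 1, 0, 0, 0, 0;
    0, 0, -2, 1, 0, 0, 0, 0, 1, 0, 0, 0, 0, 1;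
    0, 0, 1, -2, 1, 1, 0, 0, 0, 0, 0, 0, 0, 0;
    0, 0, 0, 1, -2, 0, 0, 0, 0, 0, 0, 0, 0, 0;
    0, 0, 0, 1, 0, -2, 0, 0, 0, 0, 0, 0, 0, 0;
    1, 1, 0, 0, 0, 0, -2, 0, 0, 0, 0, 0, 0, 0;
    0, 1, 0, 0, 0, 0, 0, -2, 0, 0, 0, 0, 0, 0;
    0, 0, 1, 0, 0, 0, 0, 0, -2, 0, 0, 0, 0, 0;
    0, 1, 0, 0, 0, 0, 0, 0, 0, -2, 1, 0, 0, 0;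
    0, 0, 0, 0, 0, 0, 0, 0, 0, 1, -2, 1, 0, 0;
    0, 0, 0, 0, 0, 0, 0, 0, 0, 0, 1, -2, 1, 0;
    0, 0, 0, 0, 0, 0, 0, 0, 0, 0, 0, 1, -2, 1;
    0, 0, 1, 0, 0, 0, 0, 0, 0, 0, 0, 0, 1, -2]

def GK3 : Matrix (Fin 22) (Fin 22) ℤ :=
  !![0, 1, 0, 0, 0, 0, 0, 0, 0, 0, 0, 0, 0, 0, 0, 0, 0, 0, 0, 0, 0, 0;
    1, 0, 0, 0, 0, 0, 0, 0, 0, 0, 0, 0, 0, 0, 0, 0, 0, 0, 0, 0, 0, 0;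
    0, 0, 0, 1, 0, 0, 0, 0, 0, 0, 0, 0, 0, 0, 0, 0, 0, 0, 0, 0, 0, 0;
    0, 0, 1, 0, 0, 0, 0, 0, 0, 0, 0, 0, 0, 0, 0, 0, 0, 0, 0, 0, 0, 0;
    0, 0, 0, 0, 0, 1, 0, 0, 0, 0, 0, 0, 0, 0, 0, 0, 0, 0, 0, 0, 0, 0;
    0, 0, 0, 0, 1, 0, 0, 0, 0, 0, 0, 0, 0, 0, 0, 0, 0, 0, 0, 0, 0, 0;
    0, 0, 0, 0, 0, 0, -2, 0, 1, 0, 0, 0, 0, 0, 0, 0, 0, 0, 0, 0, 0, 0;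
    0, 0, 0, 0, 0, 0, 0, -2, 0, 1, 0, 0, 0, 0, 0, 0, 0, 0, 0, 0, 0, 0;
    0, 0, 0, 0, 0, 0, 1, 0, -2, 1, 0, 0, 0, 0, 0, 0, 0, 0, 0, 0, 0, 0;
    0, 0, 0, 0, 0, 0, 0, 1, 1, -2, 1, 0, 0, 0, 0, 0, 0, 0, 0, 0, 0, 0;
    0, 0, 0, 0, 0, 0, 0, 0, 0, 1, -2, 1, 0, 0, 0, 0, 0, 0, 0, 0, 0, 0;
    0, 0, 0, 0, 0, 0, 0, 0, 0, 0, 1, -2, 1, 0, 0, 0, 0, 0, 0, 0, 0, 0;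
    0, 0, 0, 0, 0, 0, 0, 0, 0, 0, 0, 1, -2, 1, 0, 0, 0, 0, 0, 0, 0, 0;
    0, 0, 0, 0, 0, 0, 0, 0, 0, 0, 0, 0, 1, -2, 0, 0, 0, 0, 0, 0, 0, 0;
    0, 0, 0, 0, 0, 0, 0, 0, 0, 0, 0, 0, 0, 0, -2, 0, 1, 0, 0, 0, 0, 0;
    0, 0, 0, 0, 0, 0, 0, 0, 0, 0, 0, 0, 0, 0, 0, -2, 0, 1, 0, 0, 0, 0;
    0, 0, 0, 0, 0, 0, 0, 0, 0, 0, 0, 0, 0, 0, 1, 0, -2, 1, 0, 0, 0, 0;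
    0, 0, 0, 0, 0, 0, 0, 0, 0, 0, 0, 0, 0, 0, 0, 1, 1, -2, 1, 0, 0, 0;
    0, 0, 0, 0, 0, 0, 0, 0, 0, 0, 0, 0, 0, 0, 0, 0, 0, 1, -2, 1, 0, 0;
    0, 0, 0, 0, 0, 0, 0, 0, 0, 0, 0, 0, 0, 0, 0, 0, 0, 0, 1, -2, 1, 0;
    0, 0, 0, 0, 0, 0, 0, 0, 0, 0, 0, 0, 0, 0, 0, 0, 0, 0, 0, 1, -2, 1;
    0, 0, 0, 0, 0, 0, 0, 0, 0, 0, 0, 0, 0, 0, 0, 0, 0, 0, 0, 0, 1, -2]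

def A : Matrix (Fin 22) (Fin 14) ℤ :=
  !![1, 0, 0, 0, 0, 0, 0, 0, 0, 0, 0, 0, 0, 0;
    0, 0, 0, 0, 0, 0, 0, 0, 0, 0, 0, 0, 0, 0;
    0, 1, 0, 0, 0, 0, 0, 0, 0, 0, 0, 0, 0, 0;
    4, 10, 0, 0, 0, 0, 0, 0, 0, 0, 0, 0, 0, 0;
    0, 0, 1, 0, 0, 0, 0, 0, 0, 0, 0, 0, 0, 0;
    4, 26, 17, 0, 0, 0, 0, 0, 0, 0, 0, 0, 0, 0;
    0, -6, -9, 0, 1, 0, 0, 0, 0, 0, 0, 0, 0, 0;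
    0, -9, -13, 0, 0, 0, 0, 0, 0, 0, 0, 0, 0, 0;
    0, -12, -18, 1, 0, 0, 0, 0, 0, 0, 0, 0, 0, 0;
    0, -18, -26, 0, 0, 1, 0, 0, 0, 0, 0, 0, 0, 0;
    0, -15, -21, 0, 0, 0, 0, 0, 0, 0, 0, 0, 0, 0;
    0, -12, -16, 0, 0, 0, 0, 1, 0, 0, 0, 0, 0, 0;
    0, -8, -11, 0, 0, 0, 0, 0, 0, 0, 0, 0, 0, 0;
    0, -4, -6, 0, 0, 0, 0, 0, 1, 0, 0, 0, 0, 0;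
    -2, -6, -6, 0, 0, 0, 0, 0, 0, 1, 0, 0, 0, 0;
    -3, -8, -9, 0, 0, 0, 0, 0, 0, 0, 0, 0, 0, 0;
    -4, -11, -12, 0, 0, 0, 0, 0, 0, 0, 1, 0, 0, 0;
    -6, -16, -18, 0, 0, 0, 0, 0, 0, 0, 0, 1, 0, 0;
    -5, -13, -15, 0, 0, 0, 0, 0, 0, 0, 0, 0, 1, 0;
    -4, -10, -12, 0, 0, 0, 0, 0, 0, 0, 0, 0, 0, 1;
    -3, -7, -8, 0, 0, 0, 0, 0, 0, 0, 0, 0, 0, 0;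
    -2, -4, -4, 0, 0, 0, 1, 0, 0, 0, 0, 0, 0, 0]

def GA : Matrix (Fin 22) (Fin 14) ℤ :=
  !![0, 0, 0, 0, 0, 0, 0, 0, 0, 0, 0, 0, 0, 0;
    1, 0, 0, 0, 0, 0, 0, 0, 0, 0, 0, 0, 0, 0;
    4, 10, 0, 0, 0, 0, 0, 0, 0, 0, 0, 0, 0, 0;
    0, 1, 0, 0, 0, 0, 0, 0, 0, 0, 0, 0, 0, 0;
    4, 26, 17, 0, 0, 0, 0, 0, 0, 0, 0, 0, 0, 0;
    0, 0, 1, 0, 0, 0, 0, 0, 0, 0, 0, 0, 0, 0;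
    0, 0, 0, 1, -2, 0, 0, 0, 0, 0, 0, 0, 0, 0;
    0, 0, 0, 0, 0, 1, 0, 0, 0, 0, 0, 0, 0, 0;
    0, 0, 1, -2, 1, 1, 0, 0, 0, 0, 0, 0, 0, 0;
    0, 0, 0, 1, 0, -2, 0, 0, 0, 0, 0, 0, 0, 0;
    0, 0, 0, 0, 0, 1, 0, 1, 0, 0, 0, 0, 0, 0;
    0, 1, 0, 0, 0, 0, 0, -2, 0, 0, 0, 0, 0, 0;
    0, 0, 0, 0, 0, 0, 0, 1, 1, 0, 0, 0, 0, 0;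
    0, 0, 1, 0, 0, 0, 0, 0, -2, 0, 0, 0, 0, 0;
    0, 1, 0, 0, 0, 0, 0, 0, 0, -2, 1, 0, 0, 0;
    0, 0, 0, 0, 0, 0, 0, 0, 0, 0, 0, 1, 0, 0;
    0, 0, 0, 0, 0, 0, 0, 0, 0, 1, -2, 1, 0, 0;
    0, 0, 0, 0, 0, 0, 0, 0, 0, 0, 1, -2, 1, 0;
    0, 0, 0, 0, 0, 0, 0, 0, 0, 0, 0, 1, -2, 1;
    0, 0, 1, 0, 0, 0, 0, 0, 0, 0, 0, 0, 1, -2;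
    0, 0, 0, 0, 0, 0, 1, 0, 0, 0, 0, 0, 0, 1;
    1, 1, 0, 0, 0, 0, -2, 0, 0, 0, 0, 0, 0, 0]

def Bm : Matrix (Fin 14) (Fin 22) ℤ :=
  !![1, 0, 0, 0, 0, 0, 0, 0, 0, 0, 0, 0, 0, 0, 0, 0, 0, 0, 0, 0, 0, 0;
    0, 0, 1, 0, 0, 0, 0, 0, 0, 0, 0, 0, 0, 0, 0, 0, 0, 0, 0, 0, 0, 0;
    0, 0, 0, 0, 1, 0, 0, 0, 0, 0, 0, 0, 0, 0, 0, 0, 0, 0, 0, 0, 0, 0;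
    0, 0, 12, 0, 18, 0, 0, 0, 1, 0, 0, 0, 0, 0, 0, 0, 0, 0, 0, 0, 0, 0;
    0, 0, 6, 0, 9, 0, 1, 0, 0, 0, 0, 0, 0, 0, 0, 0, 0, 0, 0, 0, 0, 0;
    0, 0, 18, 0, 26, 0, 0, 0, 0, 1, 0, 0, 0, 0, 0, 0, 0, 0, 0, 0, 0, 0;
    2, 0, 4, 0, 4, 0, 0, 0, 0, 0, 0, 0, 0, 0, 0, 0, 0, 0, 0, 0, 0, 1;
    0, 0, 12, 0, 16, 0, 0, 0, 0, 0, 0, 1, 0, 0, 0, 0, 0, 0, 0, 0, 0, 0;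
    0, 0, 4, 0, 6, 0, 0, 0, 0, 0, 0, 0, 0, 1, 0, 0, 0, 0, 0, 0, 0, 0;
    2, 0, 6, 0, 6, 0, 0, 0, 0, 0, 0, 0, 0, 0, 1, 0, 0, 0, 0, 0, 0, 0;
    4, 0, 11, 0, 12, 0, 0, 0, 0, 0, 0, 0, 0, 0, 0, 0, 1, 0, 0, 0, 0, 0;
    6, 0, 16, 0, 18, 0, 0, 0, 0, 0, 0, 0, 0, 0, 0, 0, 0, 1, 0, 0, 0, 0;
    5, 0, 13, 0, 15, 0, 0, 0, 0, 0, 0, 0, 0, 0, 0, 0, 0, 0, 1, 0, 0, 0;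
    4, 0, 10, 0, 12, 0, 0, 0, 0, 0, 0, 0, 0, 0, 0, 0, 0, 0, 0, 1, 0, 0]

def Cm : Matrix (Fin 8) (Fin 22) ℤ :=
  !![0, 1, 0, 0, 0, 0, 0, 0, 0, 0, 0, 0, 0, 0, 0, 0, 0, 0, 0, 0, 0, 0;
    -4, 0, -10, 1, 0, 0, 0, 0, 0, 0, 0, 0, 0, 0, 0, 0, 0, 0, 0, 0, 0, 0;
    -4, 0, -26, 0, -17, 1, 0, 0, 0, 0, 0, 0, 0, 0, 0, 0, 0, 0, 0, 0, 0, 0;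
    0, 0, 9, 0, 13, 0, 0, 1, 0, 0, 0, 0, 0, 0, 0, 0, 0, 0, 0, 0, 0, 0;
    0, 0, 15, 0, 21, 0, 0, 0, 0, 0, 1, 0, 0, 0, 0, 0, 0, 0, 0, 0, 0, 0;
    0, 0, 8, 0, 11, 0, 0, 0, 0, 0, 0, 0, 1, 0, 0, 0, 0, 0, 0, 0, 0, 0;
    3, 0, 8, 0, 9, 0, 0, 0, 0, 0, 0, 0, 0, 0, 0, 1, 0, 0, 0, 0, 0, 0;
    3, 0, 7, 0, 8, 0, 0, 0, 0, 0, 0, 0, 0, 0, 0, 0, 0, 0, 0, 0, 1, 0]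

def Dm : Matrix (Fin 22) (Fin 8) ℤ :=
  !![0, 0, 0, 0, 0, 0, 0, 0;
    1, 0, 0, 0, 0, 0, 0, 0;
    0, 0, 0, 0, 0, 0, 0, 0;
    0, 1, 0, 0, 0, 0, 0, 0;
    0, 0, 0, 0, 0, 0, 0, 0;
    0, 0, 1, 0, 0, 0, 0, 0;
    0, 0, 0, 0, 0, 0, 0, 0;
    0, 0, 0, 1, 0, 0, 0, 0;
    0, 0, 0, 0, 0, 0, 0, 0;
    0, 0, 0, 0, 0, 0, 0, 0;
    0, 0, 0, 0, 1, 0, 0, 0;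
    0, 0, 0, 0, 0, 0, 0, 0;
    0, 0, 0, 0, 0, 1, 0, 0;
    0, 0, 0, 0, 0, 0, 0, 0;
    0, 0, 0, 0, 0, 0, 0, 0;
    0, 0, 0, 0, 0, 0, 1, 0;
    0, 0, 0, 0, 0, 0, 0, 0;
    0, 0, 0, 0, 0, 0, 0, 0;
    0, 0, 0, 0, 0, 0, 0, 0;
    0, 0, 0, 0, 0, 0, 0, 0;
    0, 0, 0, 0, 0, 0, 0, 1;
    0, 0, 0, 0, 0, 0, 0, 0]


set_option maxHeartbeats 2000000 in
set_option maxRecDepth 100000 in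
theorem hGA : GK3 * A = GA := by
  decide

set_option maxHeartbeats 2000000 in
set_option maxRecDepth 100000 in
theorem hM : Aᵀ * GA = M := by
  decide

set_option maxHeartbeats 2000000 in
set_option maxRecDepth 100000 in
theorem hBA : Bm * A = 1 := by
  decide

set_option maxHeartbeats 2000000 in
set_option maxRecDepth 100000 in
theorem hCA : Cm * A = 0 := by
  decide

set_option maxHeartbeats 2000000 in
set_option maxRecDepth 100000 in
theorem hone : A * Bm + Dm * Cm = 1 := by
  decide

theorem stmt_2 :
    ∃ ι : (Fin 14 → ℤ) →ₗ[ℤ] (Fin 22 → ℤ),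
      Function.Injective ι ∧
      (∀ x y : Fin 14 → ℤ, ι x ⬝ᵥ (GK3 *ᵥ ι y) = x ⬝ᵥ (M *ᵥ y)) ∧
      (∀ (v : Fin 22 → ℤ) (k : ℤ), k ≠ 0 → k • v ∈ LinearMap.range ι → v ∈ LinearMap.range ι)  := by
  refine ⟨Matrix.mulVecLin A, ?_, ?_, ?_⟩
  · intro x y h
    simp only [Matrix.mulVecLin_apply] at h
    have h2 : Bm *ᵥ (A *ᵥ x) = Bm *ᵥ (A *ᵥ y) := by rw [h]
    rwa [Matrix.mulVec_mulVec, Matrix.mulVec_mulVec, hBA, Matrix.one_mulVec,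
      Matrix.one_mulVec] at h2
  · intro x y
    simp only [Matrix.mulVecLin_apply]
    rw [Matrix.mulVec_mulVec, hGA, ← hM, ← Matrix.mulVec_mulVec]
    conv_rhs => rw [Matrix.dotProduct_mulVec, Matrix.vecMul_transpose]
  · rintro v k hk ⟨x, hx⟩
    simp only [Matrix.mulVecLin_apply] at hx
    have hCv : Cm *ᵥ v = 0 := by
      have h0 : k • (Cm *ᵥ v) = (0 : Fin 8 → ℤ) := by
        rw [← Matrix.mulVec_smul, ← hx, Matrix.mulVec_mulVec, hCA, Matrix.zero_mulVec]
      rcases smul_eq_zero.mp h0 with h | h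
      · exact absurd h hk
      · exact h
    refine ⟨Bm *ᵥ v, ?_⟩
    have h1 : (A * Bm + Dm * Cm) *ᵥ v = v := by rw [hone, Matrix.one_mulVec]
    rw [Matrix.add_mulVec, ← Matrix.mulVec_mulVec, ← Matrix.mulVec_mulVec, hCv,
      Matrix.mulVec_zero, add_zero] at h1
    simpa [Matrix.mulVecLin_apply] using h1
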